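/- Let k ≥ 1 be an integer and let H be a hypergraph all of whose edges have size at least 2. Then H is k-colourable if and only if there exists a total ordering < of V(H) such that H contains no increasing simple path of length k with respect to <. -/

import Mathlib

open Finset

section Defs

variable {α : Type*} [DecidableEq α]

/-- `e 0, …, e (l-1)` form a loose cycle of length `l`: distinct edges, each of size
at least 2, cyclically consecutive edges meet in exactly one vertex, all other pairs
of edges are disjoint. -/
def IsLooseCycleOn (l : ℕ) (e : ℕ → Finset α) : Prop :=
  (∀ i < l, ∀ j < l, i ≠ j → e i ≠ e j) ∧
  (∀ i < l, 2 ≤ (e i).card) ∧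
  (∀ i < l, (e i ∩ e ((i + 1) % l)).card = 1) ∧
  (∀ i < l, ∀ j < l, j ≠ i → j ≠ (i + 1) % l → i ≠ (j + 1) % l → e i ∩ e j = ∅)

/-- A hypergraph with edge set `E` contains a loose cycle of length `l`. -/
def ContainsLooseCycle (l : ℕ) (E : Set (Finset α)) : Prop :=
  ∃ e : ℕ → Finset α, IsLooseCycleOn l e ∧ ∀ i < l, e i ∈ E

/-- A hypergraph with edge set `E` contains an `r`-uniform loose cycle of length `l`. -/
def ContainsUniformLooseCycle (r l : ℕ) (E : Set (Finset α)) : Prop :=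
  ∃ e : ℕ → Finset α, IsLooseCycleOn l e ∧ (∀ i < l, (e i).card = r) ∧ ∀ i < l, e i ∈ E

/-- `f 0, …, f (k-1)` form a simple path of length `k`: each edge has size at least 2,
consecutive edges meet, non-consecutive edges are disjoint, and any two distinct
edges meet in at most one vertex. -/
def IsSimplePathOn (k : ℕ) (f : ℕ → Finset α) : Prop :=
  (∀ i < k, 2 ≤ (f i).card) ∧
  (∀ i, i + 1 < k → (f i ∩ f (i + 1)).Nonempty) ∧
  (∀ i < k, ∀ j < k, i < j → j ≠ i + 1 → f i ∩ f j = ∅) ∧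
  (∀ i < k, ∀ j < k, i ≠ j → (f i ∩ f j).card ≤ 1)

/-- The simple path `f 0, …, f (k-1)` joins `a` to `b`. -/
def SimplePathJoins (k : ℕ) (f : ℕ → Finset α) (a b : α) : Prop :=
  IsSimplePathOn k f ∧ a ∈ f 0 ∧ b ∈ f (k - 1) ∧
  (2 ≤ k → a ∉ f 1 ∧ b ∉ f (k - 2))

/-- `p` is a heavy pair of the 3-graph `H` (with respect to the parameter `l`):
it is a pair of vertices contained in at least `2l-2` edges of `H`. -/
def PairHeavy (l : ℕ) (H : Finset (Finset α)) (p : Finset α) : Prop :=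
  p.card = 2 ∧ 2 * l - 2 ≤ (H.filter fun e => p ⊆ e).card

/-- `e` is a light edge of the 3-graph `H`: an edge of `H` containing no heavy pair. -/
def EdgeLight (l : ℕ) (H : Finset (Finset α)) (e : Finset α) : Prop :=
  e ∈ H ∧ ∀ p ⊆ e, ¬ PairHeavy l H p

/-- The reduced hypergraph `H*` of a 3-graph `H`: its edges are the light edges of `H`
together with the heavy pairs of `H`. -/
def Reduced (l : ℕ) (H : Finset (Finset α)) : Set (Finset α) :=
  {e | EdgeLight l H e ∨ PairHeavy l H e}

/-- `(X, Y)` is an extender in the 3-graph `H`. -/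
def IsExtender (l : ℕ) (H : Finset (Finset α)) (X Y : Finset α) : Prop :=
  Disjoint X Y ∧ Y.card ≤ 2 * X.card ∧
  ∀ u ∈ X, ∀ v ∈ X, u ≠ v → ∀ S : Finset α,
    Disjoint S ({u, v} ∪ Y) → S.card ≤ 2 * l - 5 →
      ∃ f : ℕ → Finset α, SimplePathJoins 2 f u v ∧ (∀ i < 2, f i ∈ H) ∧
        ∀ i < 2, Disjoint (f i) S

/-- `X` is an independent set of the hypergraph with edge set `E`. -/
def IndepIn (E : Set (Finset α)) (X : Finset α) : Prop := ∀ e ∈ E, ¬ e ⊆ X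

end Defs

section AuxPluhar

variable {α : Type*} [DecidableEq α]

/-- An increasing simple path of length `j` in `H` ending at `v`. -/
def IncEnd (H : Finset (Finset α)) (le : α → α → Prop) (j : ℕ) (v : α) : Prop :=
  ∃ f : ℕ → Finset α, IsSimplePathOn j f ∧ (∀ i < j, f i ∈ H) ∧
    (∀ i < j, ∀ i' < j, i < i' → ∀ a ∈ f i, ∀ b ∈ f i', le a b) ∧
    v ∈ f (j - 1) ∧ (∀ i < j, ∀ a ∈ f i, le a v) ∧ (2 ≤ j → v ∉ f (j - 2))

lemma incEnd_zero (H : Finset (Finset α)) (le : α → α → Prop) (v : α) :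
    IncEnd H le 0 v := by
  refine ⟨fun _ => {v}, ⟨?_, ?_, ?_, ?_⟩, ?_, ?_, ?_, ?_, ?_⟩ <;>
    first
      | (intro i hi; omega)
      | (intro h; omega)
      | simp

lemma incEnd_extend {H : Finset (Finset α)} {le : α → α → Prop}
    (htrans : ∀ a b c, le a b → le b c → le a c)
    (hanti : ∀ a b, le a b → le b a → a = b)
    {e : Finset α} (heH : e ∈ H) (hecard : 2 ≤ e.card) {u w : α}
    (hu : u ∈ e) (hw : w ∈ e) (huw : u ≠ w)
    (humin : ∀ x ∈ e, le u x) (hwmax : ∀ x ∈ e, le x w)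
    {j : ℕ} (hj : IncEnd H le j u) : IncEnd H le (j + 1) w := by
  obtain ⟨f, ⟨hcard, hcons, hdisj, hone⟩, hmem, hinc, huend, humaxp, hnot2⟩ := hj
  set g : ℕ → Finset α := fun n => if n = j then e else f n with hg
  have hgj : g j = e := by simp [hg]
  have hglt : ∀ n, n < j → g n = f n := by
    intro n hn; simp [hg, Nat.ne_of_lt hn]
  have hA : ∀ n < j, ∀ x ∈ f n, x ∈ e → x = u := fun n hn x hxf hxe =>
    hanti x u (humaxp n hn x hxf) (humin x hxe)
  have hB : ∀ n, n + 2 ≤ j → u ∉ f n := by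
    intro n hn hu'
    rcases eq_or_lt_of_le hn with h | h
    · exact hnot2 (by omega) (by rw [show j - 2 = n by omega]; exact hu')
    · have hde : f n ∩ f (j - 1) = ∅ :=
        hdisj n (by omega) (j - 1) (by omega) (by omega) (by omega)
      have hmemi : u ∈ f n ∩ f (j - 1) := Finset.mem_inter.2 ⟨hu', huend⟩
      rw [hde] at hmemi
      exact absurd hmemi (Finset.notMem_empty u)
  have hkey : ∀ n < j, (f n ∩ e).card ≤ 1 := by
    intro n hn
    have hsub : f n ∩ e ⊆ {u} := by
      intro x hx
      rcases Finset.mem_inter.1 hx with ⟨hx1, hx2⟩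
      exact Finset.mem_singleton.2 (hA n hn x hx1 hx2)
    calc (f n ∩ e).card ≤ ({u} : Finset α).card := Finset.card_le_card hsub
      _ = 1 := Finset.card_singleton u
  have hdisje : ∀ n, n + 2 ≤ j → f n ∩ e = ∅ := by
    intro n hn
    apply Finset.eq_empty_iff_forall_notMem.2
    intro x hx
    rcases Finset.mem_inter.1 hx with ⟨hx1, hx2⟩
    have := hA n (by omega) x hx1 hx2
    subst this
    exact hB n hn hx1
  refine ⟨g, ⟨?_, ?_, ?_, ?_⟩, ?_, ?_, ?_, ?_, ?_⟩
  · -- cards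
    intro n hn
    rcases Nat.lt_or_ge n j with h | h
    · rw [hglt n h]; exact hcard n h
    · have : n = j := by omega
      rw [this, hgj]; exact hecard
  · -- consecutive intersections nonempty
    intro n hn
    rcases Nat.lt_or_ge (n + 1) j with h | h
    · rw [hglt n (by omega), hglt (n + 1) h]; exact hcons n h
    · have hnj : n + 1 = j := by omega
      have h1 : g n = f n := hglt n (by omega)
      have h2 : g (n + 1) = e := by rw [hnj, hgj]
      rw [h1, h2]
      refine ⟨u, Finset.mem_inter.2 ⟨?_, hu⟩⟩
      have := huend; rwa [show j - 1 = n by omega] at this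
  · -- nonconsecutive disjoint
    intro n hn m hm hlt hne
    rcases Nat.lt_or_ge m j with h | h
    · rw [hglt n (by omega), hglt m h]
      exact hdisj n (by omega) m h hlt hne
    · have hmj : m = j := by omega
      rw [hmj, hgj, hglt n (by omega)]
      exact hdisje n (by omega)
  · -- pairwise intersections small
    intro n hn m hm hne
    rcases Nat.lt_or_ge m j with h | h
    · rcases Nat.lt_or_ge n j with h' | h'
      · rw [hglt n h', hglt m h]; exact hone n h' m h hne
      · have hnj : n = j := by omega
        rw [hnj, hgj, hglt m h, Finset.inter_comm]
        exact hkey m h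
    · have hmj : m = j := by omega
      have hn' : n < j := by omega
      rw [hmj, hgj, hglt n hn']
      exact hkey n hn'
  · -- membership
    intro n hn
    rcases Nat.lt_or_ge n j with h | h
    · rw [hglt n h]; exact hmem n h
    · have : n = j := by omega
      rw [this, hgj]; exact heH
  · -- increasing
    intro n hn m hm hlt a ha b hb
    rcases Nat.lt_or_ge m j with h | h
    · rw [hglt n (by omega)] at ha; rw [hglt m h] at hb
      exact hinc n (by omega) m h hlt a ha b hb
    · have hmj : m = j := by omega
      rw [hmj, hgj] at hb
      rw [hglt n (by omega)] at ha
      exact htrans a u b (humaxp n (by omega) a ha) (humin b hb)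
  · -- end vertex
    rw [show j + 1 - 1 = j from rfl, hgj]; exact hw
  · -- maximality of w
    intro n hn a ha
    rcases Nat.lt_or_ge n j with h | h
    · rw [hglt n h] at ha
      exact htrans a u w (humaxp n h a ha) (hwmax u hu)
    · have : n = j := by omega
      rw [this, hgj] at ha
      exact hwmax a ha
  · -- w not in the previous edge
    intro h2
    have hj1 : 1 ≤ j := by omega
    rw [show j + 1 - 2 = j - 1 by omega, hglt (j - 1) (by omega)]
    intro hwf
    exact huw (hanti u w (hwmax u hu) (humaxp (j - 1) (by omega) w hwf))

end AuxPluhar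

/-- Pluhár's theorem: a hypergraph (all of whose edges have size at least 2) is
`k`-colourable if and only if there is a total ordering of its vertices admitting
no increasing simple path of length `k`. -/
theorem pluhar_colourability {α : Type*} [DecidableEq α] [Fintype α] (k : ℕ)
    (hk : 1 ≤ k) (H : Finset (Finset α)) (hH : ∀ e ∈ H, 2 ≤ e.card) :
    (∃ c : α → Fin k, ∀ e ∈ H, ∃ a ∈ e, ∃ b ∈ e, c a ≠ c b) ↔
    (∃ le : α → α → Prop, IsLinearOrder α le ∧
      ¬ ∃ f : ℕ → Finset α, IsSimplePathOn k f ∧ (∀ i < k, f i ∈ H) ∧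
        ∀ i < k, ∀ j < k, i < j → ∀ a ∈ f i, ∀ b ∈ f j, le a b) := by
  classical
  constructor
  · -- colouring → ordering
    rintro ⟨c, hc⟩
    set n := Fintype.card α with hn
    set eqv := Fintype.equivFin α with heqv
    set μ : α → ℕ := fun a => (c a).val * n + (eqv a).val with hμ
    have hmono : ∀ a b : α, μ a ≤ μ b → (c a).val ≤ (c b).val := by
      intro a b hab
      by_contra hlt
      push_neg at hlt
      have h1 : μ b < ((c b).val + 1) * n := by
        have := (eqv b).isLt
        calc μ b = (c b).val * n + (eqv b).val := rfl
          _ < (c b).val * n + n := by omega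
          _ = ((c b).val + 1) * n := (Nat.succ_mul _ _).symm
      have h2 : ((c b).val + 1) * n ≤ (c a).val * n :=
        Nat.mul_le_mul_right n hlt
      have h3 : (c a).val * n ≤ μ a := Nat.le_add_right _ _
      omega
    have hinj : Function.Injective μ := by
      intro a b hab
      have h1 : (c a).val ≤ (c b).val := hmono a b hab.le
      have h2 : (c b).val ≤ (c a).val := hmono b a hab.ge
      have hcv : (c a).val = (c b).val := le_antisymm h1 h2
      have hev : (eqv a).val = (eqv b).val := by
        have : (c a).val * n + (eqv a).val = (c b).val * n + (eqv b).val := hab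
        rw [hcv] at this
        exact Nat.add_left_cancel this
      exact eqv.injective (Fin.val_injective hev)
    refine ⟨fun a b => μ a ≤ μ b, ?_, ?_⟩
    · exact { refl := fun a => le_refl _,
              trans := fun a b c hab hbc => le_trans hab hbc,
              antisymm := fun a b h1 h2 => hinj (le_antisymm h1 h2),
              total := fun a b => le_total _ _ }
    · rintro ⟨f, hsp, hmem, hinc⟩
      have hxy : ∀ i, i < k → ∃ x ∈ f i, ∃ y ∈ f i, (c x).val < (c y).val := by
        intro i hi
        obtain ⟨a, ha, b, hb, hab⟩ := hc (f i) (hmem i hi)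
        rcases le_total (μ a) (μ b) with h | h
        · refine ⟨a, ha, b, hb, ?_⟩
          have := hmono a b h
          have : (c a).val ≠ (c b).val := fun h' => hab (Fin.val_injective h')
          omega
        · refine ⟨b, hb, a, ha, ?_⟩
          have := hmono b a h
          have : (c a).val ≠ (c b).val := fun h' => hab (Fin.val_injective h')
          omega
      have key : ∀ i, i < k → ∃ y ∈ f i, i + 1 ≤ (c y).val := by
        intro i
        induction i with
        | zero =>
          intro h0
          obtain ⟨x, hx, y, hy, hxy'⟩ := hxy 0 h0
          exact ⟨y, hy, by omega⟩
        | succ i ih =>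
          intro hik
          obtain ⟨y, hy, hyv⟩ := ih (by omega)
          obtain ⟨x, hx, z, hz, hxz⟩ := hxy (i + 1) hik
          have hle : μ y ≤ μ x :=
            hinc i (by omega) (i + 1) hik (by omega) y hy x hx
          have := hmono y x hle
          exact ⟨z, hz, by omega⟩
      obtain ⟨y, hy, hyv⟩ := key (k - 1) (by omega)
      have := (c y).isLt
      omega
  · -- ordering → colouring
    rintro ⟨le, hle, hnopath⟩
    haveI := hle
    letI lo : LinearOrder α :=
      { le := le
        lt := fun a b => le a b ∧ ¬ le b a
        le_refl := fun a => _root_.refl a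
        le_trans := fun a b c => _root_.trans
        le_antisymm := fun a b h1 h2 => _root_.antisymm h1 h2
        le_total := fun a b => Std.Total.total a b
        lt_iff_le_not_ge := fun _ _ => Iff.rfl
        toDecidableLE := Classical.decRel le }
    have htrans : ∀ a b c : α, le a b → le b c → le a c := fun a b c => _root_.trans
    have hanti : ∀ a b : α, le a b → le b a → a = b := fun a b => _root_.antisymm
    set N : α → ℕ := fun v => Nat.findGreatest (fun j => IncEnd H le j v) (k - 1) with hN
    have hNle : ∀ v, N v ≤ k - 1 := fun v => Nat.findGreatest_le _
    refine ⟨fun v => ⟨N v, by have := hNle v; omega⟩, ?_⟩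
    intro e heH
    have hecard : 2 ≤ e.card := hH e heH
    have hne : e.Nonempty := Finset.card_pos.1 (by omega)
    set u := e.min' hne with hu'
    set w := e.max' hne with hw'
    have hu : u ∈ e := e.min'_mem hne
    have hw : w ∈ e := e.max'_mem hne
    have huw : u ≠ w := ne_of_lt (e.min'_lt_max'_of_card (by omega))
    have humin : ∀ x ∈ e, le u x := fun x hx => e.min'_le x hx
    have hwmax : ∀ x ∈ e, le x w := fun x hx => e.le_max' x hx
    refine ⟨u, hu, w, hw, ?_⟩
    intro hcw
    have hNuw : N u = N w := by
      have := congrArg Fin.val hcw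
      simpa using this
    have hPu : IncEnd H le (N u) u :=
      Nat.findGreatest_spec (P := fun j => IncEnd H le j u) (Nat.zero_le (k - 1))
        (incEnd_zero H le u)
    have hPw : IncEnd H le (N u + 1) w :=
      incEnd_extend htrans hanti heH hecard hu hw huw humin hwmax hPu
    rcases Nat.lt_or_ge (N u + 1) k with hlt | hge
    · have : N u + 1 ≤ N w := Nat.le_findGreatest (by omega) hPw
      omega
    · have hNuk : N u + 1 = k := by have := hNle u; omega
      rw [hNuk] at hPw
      obtain ⟨f, h1, h2, h3, _⟩ := hPw
      exact hnopath ⟨f, h1, h2, h3⟩
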